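/- Let (𝒜, φ) be a non-commutative probability space and define the free cumulants k_n recursively by φ(a₁⋯a_n) = Σ_{π ∈ NC(n)} k_π[a₁,...,a_n]. Then for all n ≥ 2 and a₁,...,a_n ∈ 𝒜, if a_i = 1 for some i, then k_n(a₁,...,a_n) = 0. -/

import Mathlib

open scoped Classical


open scoped Classical

def NoCrossing {N : ℕ} (π : Finset (Finset (Fin N))) : Prop :=
  ¬ ∃ p1 q1 p2 q2 : Fin N, p1 < q1 ∧ q1 < p2 ∧ p2 < q2 ∧
      (∃ V ∈ π, p1 ∈ V ∧ p2 ∈ V) ∧ (∃ W ∈ π, q1 ∈ W ∧ q2 ∈ W) ∧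
      ¬(∃ V ∈ π, p1 ∈ V ∧ q1 ∈ V)

def IsPartition {N : ℕ} (π : Finset (Finset (Fin N))) : Prop :=
  (∀ V ∈ π, V.Nonempty) ∧ ∀ i : Fin N, ∃! V, V ∈ π ∧ i ∈ V

noncomputable def NCPartitions (N : ℕ) : Finset (Finset (Finset (Fin N))) :=
  Finset.univ.filter fun π => IsPartition π ∧ NoCrossing π

noncomputable def cumProd {A : Type*} [Ring A] (k : ∀ n : ℕ, (Fin n → A) → ℂ)
    {N : ℕ} (π : Finset (Finset (Fin N))) (a : Fin N → A) : ℂ :=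
  ∏ V ∈ π, k V.card (fun i => a (V.orderEmbOfFin rfl i))

def MomentCumulant {A : Type*} [Ring A] [Algebra ℂ A] (φ : A →ₗ[ℂ] ℂ)
    (k : ∀ n : ℕ, (Fin n → A) → ℂ) : Prop :=
  ∀ (N : ℕ) (a : Fin N → A), φ (List.ofFn a).prod = ∑ π ∈ NCPartitions N, cumProd k π a

def FreeFamily {A : Type*} [Ring A] [Algebra ℂ A] (φ : A →ₗ[ℂ] ℂ)
    {ι : Type*} (S : ι → Subalgebra ℂ A) : Prop :=
  ∀ (len : ℕ) (a : Fin len → A) (j : Fin len → ι),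
    (∀ i, a i ∈ S (j i)) →
    (∀ (i : ℕ) (h1 : i + 1 < len), j ⟨i, by omega⟩ ≠ j ⟨i + 1, h1⟩) →
    (∀ i, φ (a i) = 0) →
    φ (List.ofFn a).prod = 0

namespace CumAux
open Finset

/-- transport lemma for the arity argument of `k`. -/
lemma k_cast {A : Type*} (k : ∀ n : ℕ, (Fin n → A) → ℂ) {n n' : ℕ} (h : n = n')
    (g : Fin n' → A) : k n (fun j => g (Fin.cast h j)) = k n' g := by
  subst h; rfl

lemma ofFn_prod_one {A : Type*} [Monoid A] :
    ∀ {m : ℕ} (i : Fin (m+1)) (a : Fin (m+1) → A), a i = 1 →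
      (List.ofFn a).prod = (List.ofFn (fun j => a (i.succAbove j))).prod := by
  intro m
  induction m with
  | zero =>
    intro i a ha
    have : i = 0 := by ext; omega
    subst this
    simp [List.ofFn_succ, ha]
  | succ m ih =>
    intro i a ha
    rcases Fin.eq_zero_or_eq_succ i with rfl | ⟨j, rfl⟩
    · simp [List.ofFn_succ, ha, Fin.succAbove_zero]
    · rw [List.ofFn_succ (f := a),
        List.ofFn_succ (f := fun t => a (j.succ.succAbove t)), List.prod_cons, List.prod_cons]
      have h0 : j.succ.succAbove 0 = 0 := by
        rw [Fin.succAbove_of_castSucc_lt]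
        · rfl
        · simpa using Fin.succ_pos j
      rw [h0]
      congr 1
      have := ih j (fun t => a t.succ) ha
      convert this using 3
      funext t
      simp [Fin.succ_succAbove_succ]

variable {m : ℕ} (i : Fin (m+1))

noncomputable def delB (V : Finset (Fin (m+1))) : Finset (Fin m) :=
  univ.filter (fun x => i.succAbove x ∈ V)

noncomputable def insB (U : Finset (Fin m)) : Finset (Fin (m+1)) := U.image i.succAbove

lemma mem_delB {V : Finset (Fin (m+1))} {x : Fin m} : x ∈ delB i V ↔ i.succAbove x ∈ V := by
  simp [delB]

lemma mem_insB {U : Finset (Fin m)} {y : Fin (m+1)} :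
    y ∈ insB i U ↔ ∃ x ∈ U, i.succAbove x = y := by simp [insB]

lemma not_mem_insB (U : Finset (Fin m)) : i ∉ insB i U := by
  rw [mem_insB]; rintro ⟨x, -, hx⟩; exact Fin.succAbove_ne i x hx

lemma insB_delB {V : Finset (Fin (m+1))} (hV : i ∉ V) : insB i (delB i V) = V := by
  ext y
  rw [mem_insB]
  constructor
  · rintro ⟨x, hx, rfl⟩; exact (mem_delB i).1 hx
  · intro hy
    have hne : y ≠ i := fun h => hV (h ▸ hy)
    obtain ⟨x, hx⟩ := Fin.exists_succAbove_eq hne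
    exact ⟨x, (mem_delB i).2 (hx ▸ hy), hx⟩

lemma delB_insB (U : Finset (Fin m)) : delB i (insB i U) = U := by
  ext x
  rw [mem_delB, mem_insB]
  constructor
  · rintro ⟨x', hx', h⟩
    rwa [Fin.succAbove_right_injective h] at hx'
  · intro hx; exact ⟨x, hx, rfl⟩

lemma card_delB {V : Finset (Fin (m+1))} (hV : i ∉ V) : (delB i V).card = V.card := by
  conv_rhs => rw [← insB_delB i hV]
  rw [insB, card_image_of_injective _ Fin.succAbove_right_injective]


noncomputable def delP (π : Finset (Finset (Fin (m+1)))) : Finset (Finset (Fin m)) :=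
  (π.erase {i}).image (delB i)

noncomputable def insP (σ : Finset (Finset (Fin m))) : Finset (Finset (Fin (m+1))) :=
  insert {i} (σ.image (insB i))

lemma not_mem_block {π : Finset (Finset (Fin (m+1)))} (hπ : IsPartition π)
    (hi : ({i} : Finset (Fin (m+1))) ∈ π) {V : Finset (Fin (m+1))}
    (hV : V ∈ π) (hne : V ≠ {i}) : i ∉ V := fun h =>
  hne ((hπ.2 i).unique ⟨hV, h⟩ ⟨hi, mem_singleton_self i⟩)

lemma isPartition_delP {π : Finset (Finset (Fin (m+1)))} (hπ : IsPartition π)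
    (hi : ({i} : Finset (Fin (m+1))) ∈ π) : IsPartition (delP i π) := by
  constructor
  · rintro U hU
    obtain ⟨V, hV, rfl⟩ := Finset.mem_image.1 hU
    have hVπ : V ∈ π := mem_of_mem_erase hV
    have hVne : V ≠ {i} := ne_of_mem_erase hV
    have hiV : i ∉ V := not_mem_block i hπ hi hVπ hVne
    obtain ⟨v, hv⟩ := hπ.1 V hVπ
    have hvne : v ≠ i := fun h => hiV (h ▸ hv)
    obtain ⟨x, hx⟩ := Fin.exists_succAbove_eq hvne
    exact ⟨x, (mem_delB i).2 (hx ▸ hv)⟩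
  · intro x
    obtain ⟨V, ⟨hVπ, hxV⟩, hVu⟩ := hπ.2 (i.succAbove x)
    have hVne : V ≠ {i} := by
      rintro rfl
      exact Fin.succAbove_ne i x (mem_singleton.1 hxV)
    refine ⟨delB i V, ⟨mem_image_of_mem _ (mem_erase.2 ⟨hVne, hVπ⟩), (mem_delB i).2 hxV⟩, ?_⟩
    rintro U ⟨hU, hxU⟩
    obtain ⟨W, hW, rfl⟩ := Finset.mem_image.1 hU
    have : W = V := hVu W ⟨mem_of_mem_erase hW, (mem_delB i).1 hxU⟩
    rw [this]

lemma noCrossing_delP {π : Finset (Finset (Fin (m+1)))} (hπ : IsPartition π)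
    (hnc : NoCrossing π) (hi : ({i} : Finset (Fin (m+1))) ∈ π) : NoCrossing (delP i π) := by
  rintro ⟨p1, q1, p2, q2, h1, h2, h3, ⟨V', hV', hp1, hp2⟩, ⟨W', hW', hq1, hq2⟩, hnot⟩
  obtain ⟨V, hV, rfl⟩ := Finset.mem_image.1 hV'
  obtain ⟨W, hW, rfl⟩ := Finset.mem_image.1 hW'
  refine hnc ⟨i.succAbove p1, i.succAbove q1, i.succAbove p2, i.succAbove q2,
    Fin.strictMono_succAbove i h1, Fin.strictMono_succAbove i h2, Fin.strictMono_succAbove i h3,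
    ⟨V, mem_of_mem_erase hV, (mem_delB i).1 hp1, (mem_delB i).1 hp2⟩,
    ⟨W, mem_of_mem_erase hW, (mem_delB i).1 hq1, (mem_delB i).1 hq2⟩, ?_⟩
  rintro ⟨U, hU, hpU, hqU⟩
  have hUne : U ≠ {i} := by
    rintro rfl
    exact Fin.succAbove_ne i p1 (mem_singleton.1 hpU)
  exact hnot ⟨delB i U, mem_image_of_mem _ (mem_erase.2 ⟨hUne, hU⟩),
    (mem_delB i).2 hpU, (mem_delB i).2 hqU⟩

lemma isPartition_insP {σ : Finset (Finset (Fin m))} (hσ : IsPartition σ) :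
    IsPartition (insP i σ) := by
  constructor
  · rintro V hV
    rcases mem_insert.1 hV with rfl | hV
    · exact ⟨i, mem_singleton_self i⟩
    · obtain ⟨U, hU, rfl⟩ := Finset.mem_image.1 hV
      exact (hσ.1 U hU).image _
  · intro y
    by_cases hy : y = i
    · subst hy
      refine ⟨{y}, ⟨mem_insert_self _ _, mem_singleton_self y⟩, ?_⟩
      rintro W ⟨hW, hyW⟩
      rcases mem_insert.1 hW with rfl | hW
      · rfl
      · obtain ⟨U, hU, rfl⟩ := Finset.mem_image.1 hW
        exact absurd hyW (not_mem_insB y U)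
    · obtain ⟨x, rfl⟩ := Fin.exists_succAbove_eq (Ne.symm (fun h => hy h.symm))
      obtain ⟨U, ⟨hU, hxU⟩, hUu⟩ := hσ.2 x
      refine ⟨insB i U, ⟨mem_insert_of_mem (mem_image_of_mem _ hU),
        (mem_insB i).2 ⟨x, hxU, rfl⟩⟩, ?_⟩
      rintro W ⟨hW, hyW⟩
      rcases mem_insert.1 hW with rfl | hW
      · exact absurd (mem_singleton.1 hyW) (Fin.succAbove_ne i x)
      · obtain ⟨U', hU', rfl⟩ := Finset.mem_image.1 hW
        obtain ⟨x', hx', hxx⟩ := (mem_insB i).1 hyW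
        have : x' = x := Fin.succAbove_right_injective hxx
        subst this
        rw [hUu U' ⟨hU', hx'⟩]

lemma noCrossing_insP {σ : Finset (Finset (Fin m))} (hnc : NoCrossing σ) :
    NoCrossing (insP i σ) := by
  rintro ⟨p1, q1, p2, q2, h1, h2, h3, ⟨V', hV', hp1, hp2⟩, ⟨W', hW', hq1, hq2⟩, hnot⟩
  have hVne : V' ≠ {i} := by
    rintro rfl
    rw [mem_singleton.1 hp1] at h1
    rw [mem_singleton.1 hp2] at h2
    exact absurd (h1.trans h2) (lt_irrefl i)
  have hWne : W' ≠ {i} := by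
    rintro rfl
    rw [mem_singleton.1 hq1] at h2
    rw [mem_singleton.1 hq2] at h3
    exact absurd (h2.trans h3) (lt_irrefl i)
  obtain ⟨V, hV, rfl⟩ := Finset.mem_image.1 ((mem_insert.1 hV').resolve_left hVne)
  obtain ⟨W, hW, rfl⟩ := Finset.mem_image.1 ((mem_insert.1 hW').resolve_left hWne)
  obtain ⟨x1, hx1, rfl⟩ := (mem_insB i).1 hp1
  obtain ⟨x2, hx2, rfl⟩ := (mem_insB i).1 hp2
  obtain ⟨y1, hy1, rfl⟩ := (mem_insB i).1 hq1
  obtain ⟨y2, hy2, rfl⟩ := (mem_insB i).1 hq2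
  refine hnc ⟨x1, y1, x2, y2, (Fin.strictMono_succAbove i).lt_iff_lt.1 h1,
    (Fin.strictMono_succAbove i).lt_iff_lt.1 h2, (Fin.strictMono_succAbove i).lt_iff_lt.1 h3,
    ⟨V, hV, hx1, hx2⟩, ⟨W, hW, hy1, hy2⟩, ?_⟩
  rintro ⟨U, hU, hxU, hyU⟩
  exact hnot ⟨insB i U, mem_insert_of_mem (mem_image_of_mem _ hU),
    (mem_insB i).2 ⟨x1, hxU, rfl⟩, (mem_insB i).2 ⟨y1, hyU, rfl⟩⟩

lemma insP_delP {π : Finset (Finset (Fin (m+1)))} (hπ : IsPartition π)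
    (hi : ({i} : Finset (Fin (m+1))) ∈ π) : insP i (delP i π) = π := by
  unfold insP delP
  rw [Finset.image_image]
  have : (π.erase {i}).image (insB i ∘ delB i) = π.erase {i} := by
    rw [Finset.image_congr (g := id), Finset.image_id]
    intro V hV
    exact insB_delB i (not_mem_block i hπ hi (mem_of_mem_erase hV) (ne_of_mem_erase hV))
  rw [this, insert_erase hi]

lemma delP_insP (σ : Finset (Finset (Fin m))) : delP i (insP i σ) = σ := by
  unfold insP delP
  have h1 : ({i} : Finset (Fin (m+1))) ∉ σ.image (insB i) := by
    intro h
    obtain ⟨U, -, hU⟩ := Finset.mem_image.1 h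
    exact not_mem_insB i U (hU ▸ mem_singleton_self i)
  rw [erase_insert h1, Finset.image_image]
  rw [Finset.image_congr (g := id), Finset.image_id]
  intro U hU
  exact delB_insB i U

lemma k_block {A : Type*} [Ring A] (k : ∀ n : ℕ, (Fin n → A) → ℂ) (a : Fin (m+1) → A)
    {V : Finset (Fin (m+1))} (hV : i ∉ V) :
    k (delB i V).card (fun j => a (i.succAbove ((delB i V).orderEmbOfFin rfl j)))
      = k V.card (fun j => a (V.orderEmbOfFin rfl j)) := by
  have hc : (delB i V).card = V.card := card_delB i hV
  have hF : (fun t : Fin V.card => i.succAbove ((delB i V).orderEmbOfFin hc t))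
      = fun t => V.orderEmbOfFin rfl t := by
    refine orderEmbOfFin_unique rfl (fun t => ?_) ?_
    · exact (mem_delB i).1 (orderEmbOfFin_mem _ hc t)
    · exact (Fin.strictMono_succAbove i).comp (OrderEmbedding.strictMono _)
  have key : (fun j : Fin (delB i V).card => a (i.succAbove ((delB i V).orderEmbOfFin rfl j)))
      = fun j => a (V.orderEmbOfFin rfl (Fin.cast hc j)) := by
    funext j
    have := congrFun hF (Fin.cast hc j)
    rw [← this]
    have h2 : ∀ (n : ℕ) (h : (delB i V).card = n) (j : Fin (delB i V).card),
        ((delB i V).orderEmbOfFin h) (Fin.cast h j) = ((delB i V).orderEmbOfFin rfl) j := by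
      intro n h j; subst h; rfl
    rw [h2 _ hc j]
  rw [key]
  exact k_cast k hc (fun j => a (V.orderEmbOfFin rfl j))

lemma cumProd_delP {A : Type*} [Ring A] (k : ∀ n : ℕ, (Fin n → A) → ℂ)
    {π : Finset (Finset (Fin (m+1)))} (hπ : IsPartition π)
    (hi : ({i} : Finset (Fin (m+1))) ∈ π) (a : Fin (m+1) → A) (ha : a i = 1)
    (hk1 : k 1 (fun _ => (1:A)) = 1) :
    cumProd k π a = cumProd k (delP i π) (fun j => a (i.succAbove j)) := by
  unfold cumProd delP
  rw [Finset.prod_image]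
  · conv_lhs => rw [← insert_erase hi]
    rw [Finset.prod_insert (notMem_erase _ _)]
    have hsing : k ({i} : Finset (Fin (m+1))).card
        (fun j => a (({i} : Finset (Fin (m+1))).orderEmbOfFin rfl j)) = 1 := by
      have : (fun j : Fin ({i} : Finset (Fin (m+1))).card =>
          a (({i} : Finset (Fin (m+1))).orderEmbOfFin rfl j)) = fun _ => (1:A) := by
        funext j
        have := orderEmbOfFin_mem ({i} : Finset (Fin (m+1))) rfl j
        rw [mem_singleton.1 this, ha]
      rw [this]
      exact hk1
    rw [hsing, one_mul]
    refine Finset.prod_congr rfl (fun V hV => ?_)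
    exact (k_block i k a (not_mem_block i hπ hi (mem_of_mem_erase hV) (ne_of_mem_erase hV))).symm
  · intro V hV W hW h
    have hiV := not_mem_block i hπ hi (mem_of_mem_erase hV) (ne_of_mem_erase hV)
    have hiW := not_mem_block i hπ hi (mem_of_mem_erase hW) (ne_of_mem_erase hW)
    rw [← insB_delB i hiV, ← insB_delB i hiW, h]

lemma mem_NCPartitions {N : ℕ} {π : Finset (Finset (Fin N))} :
    π ∈ NCPartitions N ↔ IsPartition π ∧ NoCrossing π := by
  simp [NCPartitions]

lemma NCPartitions_one :
    NCPartitions 1 = {({({0} : Finset (Fin 1))} : Finset (Finset (Fin 1)))} := by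
  ext π
  simp only [mem_NCPartitions, Finset.mem_singleton]
  constructor
  · rintro ⟨⟨hne, hu⟩, -⟩
    obtain ⟨V, ⟨hV, h0⟩, -⟩ := hu 0
    have hV0 : V = {0} := by
      ext x
      have hx : x = 0 := by ext; omega
      subst hx
      simp [h0]
    ext W
    simp only [Finset.mem_singleton]
    constructor
    · intro hW
      obtain ⟨w, hw⟩ := hne W hW
      have hw0 : w = 0 := by ext; omega
      subst hw0
      rw [(hu 0).unique ⟨hW, hw⟩ ⟨hV, h0⟩, hV0]
    · rintro rfl
      exact hV0 ▸ hV
  · rintro rfl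
    refine ⟨⟨?_, ?_⟩, ?_⟩
    · intro V hV
      rw [Finset.mem_singleton] at hV
      subst hV
      exact ⟨0, Finset.mem_singleton_self 0⟩
    · intro x
      have hx : x = 0 := by ext; omega
      subst hx
      exact ⟨{0}, ⟨Finset.mem_singleton_self _, Finset.mem_singleton_self _⟩,
        by rintro W ⟨hW, -⟩; exact Finset.mem_singleton.1 hW⟩
    · rintro ⟨p1, q1, p2, q2, h1, -⟩
      have : p1 = q1 := by ext; omega
      exact absurd h1 (this ▸ lt_irrefl _)

lemma k_one {A : Type*} [Ring A] [Algebra ℂ A] (φ : A →ₗ[ℂ] ℂ) (hφ : φ 1 = 1)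
    (k : ∀ n : ℕ, (Fin n → A) → ℂ) (hk : MomentCumulant φ k) :
    k 1 (fun _ => (1 : A)) = 1 := by
  have h := hk 1 (fun _ => (1 : A))
  rw [NCPartitions_one, Finset.sum_singleton] at h
  unfold cumProd at h
  rw [Finset.prod_singleton] at h
  simp only [List.ofFn_succ, List.ofFn_zero, List.prod_cons, List.prod_nil, mul_one] at h
  rw [hφ] at h
  exact h.symm

lemma top_mem_NCPartitions (N : ℕ) (hN : 1 ≤ N) :
    ({(univ : Finset (Fin N))} : Finset (Finset (Fin N))) ∈ NCPartitions N := by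
  rw [mem_NCPartitions]
  refine ⟨⟨?_, ?_⟩, ?_⟩
  · intro V hV
    rw [Finset.mem_singleton] at hV
    subst hV
    exact ⟨⟨0, hN⟩, mem_univ _⟩
  · intro x
    exact ⟨univ, ⟨Finset.mem_singleton_self _, mem_univ _⟩,
      by rintro W ⟨hW, -⟩; exact Finset.mem_singleton.1 hW⟩
  · rintro ⟨p1, q1, p2, q2, -, -, -, -, -, hnot⟩
    exact hnot ⟨univ, Finset.mem_singleton_self _, mem_univ _, mem_univ _⟩

lemma cumProd_top {A : Type*} [Ring A] (k : ∀ n : ℕ, (Fin n → A) → ℂ) (N : ℕ) (a : Fin N → A) :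
    cumProd k ({(univ : Finset (Fin N))} : Finset (Finset (Fin N))) a = k N a := by
  unfold cumProd
  rw [Finset.prod_singleton]
  have hc : (univ : Finset (Fin N)).card = N := Finset.card_fin N
  have hemb : (fun t : Fin N => t) = fun t => (univ : Finset (Fin N)).orderEmbOfFin hc t :=
    orderEmbOfFin_unique hc (fun t => mem_univ t) strictMono_id
  have h2 : ∀ (M : ℕ) (h : (univ : Finset (Fin N)).card = M) (j : Fin (univ : Finset (Fin N)).card),
      ((univ : Finset (Fin N)).orderEmbOfFin h) (Fin.cast h j)
        = ((univ : Finset (Fin N)).orderEmbOfFin rfl) j := by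
    intro M h j; subst h; rfl
  rw [← k_cast k hc a]
  congr 1
  funext j
  rw [← h2 N hc j]
  exact congrArg a (congrFun hemb (Fin.cast hc j)).symm

lemma cumProd_eq_zero {A : Type*} [Ring A] (k : ∀ n : ℕ, (Fin n → A) → ℂ) {N : ℕ}
    {π : Finset (Finset (Fin N))} (hπ : IsPartition π) (i : Fin N) (a : Fin N → A)
    (ha : a i = 1) (hs : ({i} : Finset (Fin N)) ∉ π)
    (hne : π ≠ {(univ : Finset (Fin N))})
    (IH : ∀ M, M < N → 2 ≤ M → ∀ b : Fin M → A, (∃ t, b t = 1) → k M b = 0) :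
    cumProd k π a = 0 := by
  obtain ⟨V, ⟨hVπ, hiV⟩, -⟩ := hπ.2 i
  have hVne1 : V ≠ {i} := by rintro rfl; exact hs hVπ
  have h2le : 2 ≤ V.card := by
    have hex : ∃ x ∈ V, x ≠ i := by
      by_contra h
      push_neg at h
      apply hVne1
      ext x
      rw [Finset.mem_singleton]
      exact ⟨fun hx => h x hx, fun hx => hx ▸ hiV⟩
    obtain ⟨x, hx, hxi⟩ := hex
    exact Finset.one_lt_card.2 ⟨x, hx, i, hiV, hxi⟩
  have hVuniv : V ≠ univ := by
    rintro rfl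
    apply hne
    ext W
    rw [Finset.mem_singleton]
    constructor
    · intro hW
      obtain ⟨w, hw⟩ := hπ.1 W hW
      exact (hπ.2 w).unique ⟨hW, hw⟩ ⟨hVπ, mem_univ w⟩
    · rintro rfl; exact hVπ
  have hlt : V.card < N := by
    have := Finset.card_lt_card (Finset.ssubset_univ_iff.2 hVuniv)
    simpa using this
  unfold cumProd
  refine Finset.prod_eq_zero hVπ ?_
  refine IH V.card hlt h2le _ ?_
  have hmem : i ∈ Set.range (V.orderEmbOfFin rfl) := by
    rw [range_orderEmbOfFin]
    exact hiV
  obtain ⟨t, ht⟩ := hmem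
  exact ⟨t, by rw [ht, ha]⟩

end CumAux

/-- Free cumulants of order ≥ 2 vanish when one argument is the unit. -/
theorem cumulant_eq_zero_of_one {A : Type*} [Ring A] [Algebra ℂ A]
    (φ : A →ₗ[ℂ] ℂ) (hφ : φ 1 = 1)
    (k : ∀ n : ℕ, (Fin n → A) → ℂ) (hk : MomentCumulant φ k) :
    ∀ n, 2 ≤ n → ∀ a : Fin n → A, (∃ i, a i = 1) → k n a = 0 := by
  have k1 : k 1 (fun _ => (1 : A)) = 1 := CumAux.k_one φ hφ k hk
  intro n
  induction n using Nat.strong_induction_on with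
  | _ n IH =>
    intro hn a ha
    obtain ⟨i, hai⟩ := ha
    obtain ⟨m, rfl⟩ : ∃ m, n = m + 1 := ⟨n - 1, by omega⟩
    set b : Fin m → A := fun j => a (i.succAbove j) with hb
    have hprod : (List.ofFn a).prod = (List.ofFn b).prod := CumAux.ofFn_prod_one i a hai
    have hma := hk (m + 1) a
    have hmb := hk m b
    have hsplit := Finset.sum_filter_add_sum_filter_not (NCPartitions (m + 1))
      (fun π => ({i} : Finset (Fin (m + 1))) ∈ π) (fun π => cumProd k π a)
    have hS1 : ∑ π ∈ (NCPartitions (m + 1)).filter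
        (fun π => ({i} : Finset (Fin (m + 1))) ∈ π), cumProd k π a
        = ∑ σ ∈ NCPartitions m, cumProd k σ b := by
      refine Finset.sum_nbij' (CumAux.delP i) (CumAux.insP i) ?_ ?_ ?_ ?_ ?_
      · intro π hπ
        rw [Finset.mem_filter] at hπ
        obtain ⟨hmem, hi⟩ := hπ
        rw [CumAux.mem_NCPartitions] at hmem ⊢
        exact ⟨CumAux.isPartition_delP i hmem.1 hi, CumAux.noCrossing_delP i hmem.1 hmem.2 hi⟩
      · intro σ hσ
        rw [CumAux.mem_NCPartitions] at hσ
        rw [Finset.mem_filter, CumAux.mem_NCPartitions]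
        exact ⟨⟨CumAux.isPartition_insP i hσ.1, CumAux.noCrossing_insP i hσ.2⟩,
          Finset.mem_insert_self _ _⟩
      · intro π hπ
        rw [Finset.mem_filter, CumAux.mem_NCPartitions] at hπ
        exact CumAux.insP_delP i hπ.1.1 hπ.2
      · intro σ _
        exact CumAux.delP_insP i σ
      · intro π hπ
        rw [Finset.mem_filter, CumAux.mem_NCPartitions] at hπ
        exact CumAux.cumProd_delP i k hπ.1.1 hπ.2 a hai k1
    have hS2 : ∑ π ∈ (NCPartitions (m + 1)).filter
        (fun π => ¬ ({i} : Finset (Fin (m + 1))) ∈ π), cumProd k π a = k (m + 1) a := by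
      rw [← CumAux.cumProd_top k (m + 1) a]
      refine Finset.sum_eq_single_of_mem _ ?_ ?_
      · rw [Finset.mem_filter]
        refine ⟨CumAux.top_mem_NCPartitions (m + 1) (by omega), ?_⟩
        rw [Finset.mem_singleton]
        intro h
        have hcard := congrArg Finset.card h
        rw [Finset.card_singleton, Finset.card_fin] at hcard
        omega
      · intro π hπ hne
        rw [Finset.mem_filter, CumAux.mem_NCPartitions] at hπ
        exact CumAux.cumProd_eq_zero k hπ.1.1 i a hai hπ.2 hne (fun M hM h2 c hc => IH M hM h2 c hc)
    rw [hS1, hS2, ← hmb, ← hma, hprod] at hsplit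
    exact add_eq_left.1 hsplit
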